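/- Suppose ν_1, ..., ν_n ∈ C^m satisfy: the polynomial Σ_α |2 z^n Σ_i ν_i^α z^i|^2 in (z, conj z) is divisible by |z|^2 = Σ_k |z^k|^2 (as real polynomials). Then ⟨ν_i, ν_j⟩ = 0 for i ≠ j and |ν_i|^2 = |ν_j|^2 for all i, j; consequently there exists λ ≥ 0 and a unitary transformation U of C^m with U ν_i = λ e_i for each i (where e_i are the first n standard basis vectors), provided m ≥ n. -/

import Mathlib

open Finset Complex

private lemma Ipow3 : Complex.I ^ 3 = -Complex.I := by
  rw [pow_succ, Complex.I_sq]; ring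
private lemma Ipow4 : Complex.I ^ 4 = 1 := by
  rw [pow_succ, Ipow3]; simp [Complex.I_mul_I]
private lemma Ipow5 : Complex.I ^ 5 = Complex.I := by
  rw [pow_succ, Ipow4]; ring
private lemma Ipow6 : Complex.I ^ 6 = -1 := by
  rw [pow_succ, Ipow5, Complex.I_mul_I]
private lemma Ipow7 : Complex.I ^ 7 = -Complex.I := by
  rw [pow_succ, Ipow6]; ring
private lemma Ipow8 : Complex.I ^ 8 = 1 := by
  rw [pow_succ, Ipow7]; simp [Complex.I_mul_I]

private lemma sum3aux {n : ℕ} (i j l : Fin n) (hij : i ≠ j) (hil : i ≠ l) (hjl : j ≠ l)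
    (a b c : ℂ) (z f : Fin n → ℂ)
    (hz : ∀ k, z k = if k = i then a else if k = j then b else if k = l then c else 0) :
    ∑ k, z k * f k = a * f i + b * f j + c * f l := by
  have key : ∀ k, z k * f k =
      (if k = i then a * f i else 0) + (if k = j then b * f j else 0) +
      (if k = l then c * f l else 0) := by
    intro k
    rcases eq_or_ne k i with rfl | h1
    · simp [hz, hij, hil]
    rcases eq_or_ne k j with rfl | h2
    · simp [hz, h1, hjl]
    rcases eq_or_ne k l with rfl | h3
    · simp [hz, h1, h2]
    · simp [hz, h1, h2, h3]
  rw [Finset.sum_congr rfl fun k _ => key k]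
  simp [Finset.sum_add_distrib]

private lemma conj3aux {n : ℕ} (i j l : Fin n) (a b c : ℂ) (z : Fin n → ℂ)
    (hz : ∀ k, z k = if k = i then a else if k = j then b else if k = l then c else 0) :
    ∀ k, (starRingEnd ℂ) (z k) = if k = i then (starRingEnd ℂ) a else if k = j then
      (starRingEnd ℂ) b else if k = l then (starRingEnd ℂ) c else 0 := by
  intro k; rw [hz]; split_ifs <;> simp

private lemma quad3 {n : ℕ} (i j l : Fin n) (hij : i ≠ j) (hil : i ≠ l) (hjl : j ≠ l)
    (a b c : ℂ) (z : Fin n → ℂ)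
    (hz : ∀ k, z k = if k = i then a else if k = j then b else if k = l then c else 0)
    (M : Fin n → Fin n → ℂ) :
    ∑ p, ∑ q, M p q * z p * (starRingEnd ℂ) (z q)
      = a * ((starRingEnd ℂ) a * M i i + (starRingEnd ℂ) b * M i j + (starRingEnd ℂ) c * M i l)
      + b * ((starRingEnd ℂ) a * M j i + (starRingEnd ℂ) b * M j j + (starRingEnd ℂ) c * M j l)
      + c * ((starRingEnd ℂ) a * M l i + (starRingEnd ℂ) b * M l j + (starRingEnd ℂ) c * M l l) := by
  have hzc := conj3aux i j l a b c z hz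
  calc ∑ p, ∑ q, M p q * z p * (starRingEnd ℂ) (z q)
      = ∑ p, z p * ((starRingEnd ℂ) a * M p i + (starRingEnd ℂ) b * M p j
          + (starRingEnd ℂ) c * M p l) := by
        refine Finset.sum_congr rfl fun p _ => ?_
        rw [← sum3aux i j l hij hil hjl _ _ _ (fun q => (starRingEnd ℂ) (z q))
          (fun q => M p q) hzc, Finset.mul_sum]
        exact Finset.sum_congr rfl fun q _ => by ring
    _ = _ := sum3aux i j l hij hil hjl a b c z _ hz

private lemma norm3 {n : ℕ} (i j l : Fin n) (hij : i ≠ j) (hil : i ≠ l) (hjl : j ≠ l)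
    (a b c : ℂ) (z : Fin n → ℂ)
    (hz : ∀ k, z k = if k = i then a else if k = j then b else if k = l then c else 0) :
    ∑ k, z k * (starRingEnd ℂ) (z k)
      = a * (starRingEnd ℂ) a + b * (starRingEnd ℂ) b + c * (starRingEnd ℂ) c := by
  have hzc := conj3aux i j l a b c z hz
  calc ∑ k, z k * (starRingEnd ℂ) (z k)
      = a * (starRingEnd ℂ) (z i) + b * (starRingEnd ℂ) (z j) + c * (starRingEnd ℂ) (z l) :=
        sum3aux i j l hij hil hjl a b c z _ hz
    _ = _ := by
        rw [hzc i, hzc j, hzc l]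
        simp [Ne.symm hij, Ne.symm hil, Ne.symm hjl]

private lemma sum2aux {n : ℕ} (i l : Fin n) (hil : i ≠ l)
    (a c : ℂ) (z f : Fin n → ℂ)
    (hz : ∀ k, z k = if k = i then a else if k = l then c else 0) :
    ∑ k, z k * f k = a * f i + c * f l := by
  have key : ∀ k, z k * f k =
      (if k = i then a * f i else 0) + (if k = l then c * f l else 0) := by
    intro k
    rcases eq_or_ne k i with rfl | h1
    · simp [hz, hil]
    rcases eq_or_ne k l with rfl | h3
    · simp [hz, h1]
    · simp [hz, h1, h3]
  rw [Finset.sum_congr rfl fun k _ => key k]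
  simp [Finset.sum_add_distrib]

private lemma conj2aux {n : ℕ} (i l : Fin n) (a c : ℂ) (z : Fin n → ℂ)
    (hz : ∀ k, z k = if k = i then a else if k = l then c else 0) :
    ∀ k, (starRingEnd ℂ) (z k) = if k = i then (starRingEnd ℂ) a else if k = l then
      (starRingEnd ℂ) c else 0 := by
  intro k; rw [hz]; split_ifs <;> simp

private lemma quad2 {n : ℕ} (i l : Fin n) (hil : i ≠ l)
    (a c : ℂ) (z : Fin n → ℂ)
    (hz : ∀ k, z k = if k = i then a else if k = l then c else 0)
    (M : Fin n → Fin n → ℂ) :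
    ∑ p, ∑ q, M p q * z p * (starRingEnd ℂ) (z q)
      = a * ((starRingEnd ℂ) a * M i i + (starRingEnd ℂ) c * M i l)
      + c * ((starRingEnd ℂ) a * M l i + (starRingEnd ℂ) c * M l l) := by
  have hzc := conj2aux i l a c z hz
  calc ∑ p, ∑ q, M p q * z p * (starRingEnd ℂ) (z q)
      = ∑ p, z p * ((starRingEnd ℂ) a * M p i + (starRingEnd ℂ) c * M p l) := by
        refine Finset.sum_congr rfl fun p _ => ?_
        rw [← sum2aux i l hil _ _ (fun q => (starRingEnd ℂ) (z q)) (fun q => M p q) hzc,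
          Finset.mul_sum]
        exact Finset.sum_congr rfl fun q _ => by ring
    _ = _ := sum2aux i l hil a c z _ hz

private lemma norm2 {n : ℕ} (i l : Fin n) (hil : i ≠ l)
    (a c : ℂ) (z : Fin n → ℂ)
    (hz : ∀ k, z k = if k = i then a else if k = l then c else 0) :
    ∑ k, z k * (starRingEnd ℂ) (z k)
      = a * (starRingEnd ℂ) a + c * (starRingEnd ℂ) c := by
  have hzc := conj2aux i l a c z hz
  calc ∑ k, z k * (starRingEnd ℂ) (z k)
      = a * (starRingEnd ℂ) (z i) + c * (starRingEnd ℂ) (z l) :=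
        sum2aux i l hil a c z _ hz
    _ = _ := by
        rw [hzc i, hzc l]
        simp [Ne.symm hil]

/-- Converse: if `Σ_α |2 zⁿ Σ_i ν_i^α z^i|²` is divisible by `|z|²` (as polynomials in
`z, z̄`), then the `ν_i` are pairwise orthogonal with equal norms; consequently, when
`m ≥ n`, there are `λ ≥ 0` and a unitary `U` of `ℂ^m` with `U ν_i = λ e_i` for all `i`. -/
theorem rank_one_bochner_flat_normal_form (n m : ℕ) (hn : 0 < n) (hm : n ≤ m)
    (ln : Fin n) (hln : (ln : ℕ) = n - 1)
    (ν : Fin n → Fin m → ℂ)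
    (hdiv : ∃ h : Fin n → Fin n → ℂ, ∀ z : Fin n → ℂ,
      ∑ α, (2 * z ln * ∑ i, ν i α * z i)
          * (starRingEnd ℂ) (2 * z ln * ∑ i, ν i α * z i)
        = (∑ k, z k * (starRingEnd ℂ) (z k))
          * (∑ i, ∑ j, h i j * z i * (starRingEnd ℂ) (z j))) :
    (∀ i j, i ≠ j → ∑ α, ν i α * (starRingEnd ℂ) (ν j α) = 0) ∧
    (∀ i j, ∑ α, ν i α * (starRingEnd ℂ) (ν i α)
      = ∑ α, ν j α * (starRingEnd ℂ) (ν j α)) ∧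
    ∃ lam : ℝ, 0 ≤ lam ∧ ∃ U ∈ Matrix.unitaryGroup (Fin m) ℂ,
      ∀ i : Fin n, U.mulVec (ν i) = fun a : Fin m =>
        if (a : ℕ) = (i : ℕ) then (lam : ℂ) else 0 := by
  classical
  obtain ⟨h, hdiv⟩ := hdiv
  set G : Fin n → Fin n → ℂ := fun i j => ∑ α, ν i α * (starRingEnd ℂ) (ν j α) with hGdef
  have hGapp : ∀ i j, G i j = ∑ α, ν i α * (starRingEnd ℂ) (ν j α) := fun _ _ => rfl
  -- key identity
  have key : ∀ z : Fin n → ℂ,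
      4 * z ln * (starRingEnd ℂ) (z ln) * (∑ i, ∑ j, G i j * z i * (starRingEnd ℂ) (z j))
        = (∑ k, z k * (starRingEnd ℂ) (z k))
          * (∑ i, ∑ j, h i j * z i * (starRingEnd ℂ) (z j)) := by
    intro z
    rw [← hdiv z]
    calc 4 * z ln * (starRingEnd ℂ) (z ln)
          * (∑ i, ∑ j, G i j * z i * (starRingEnd ℂ) (z j))
        = 4 * z ln * (starRingEnd ℂ) (z ln)
          * (∑ α, (∑ i, ν i α * z i) * (∑ j, (starRingEnd ℂ) (ν j α) * (starRingEnd ℂ) (z j))) := by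
          congr 1
          calc ∑ i, ∑ j, G i j * z i * (starRingEnd ℂ) (z j)
              = ∑ i, ∑ j, ∑ α, (ν i α * z i) * ((starRingEnd ℂ) (ν j α) * (starRingEnd ℂ) (z j)) := by
                refine Finset.sum_congr rfl fun i _ => Finset.sum_congr rfl fun j _ => ?_
                rw [hGapp, Finset.sum_mul, Finset.sum_mul]
                exact Finset.sum_congr rfl fun α _ => by ring
            _ = ∑ i, ∑ α, ∑ j, (ν i α * z i) * ((starRingEnd ℂ) (ν j α) * (starRingEnd ℂ) (z j)) :=
                Finset.sum_congr rfl fun i _ => Finset.sum_comm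
            _ = ∑ α, ∑ i, ∑ j, (ν i α * z i) * ((starRingEnd ℂ) (ν j α) * (starRingEnd ℂ) (z j)) :=
                Finset.sum_comm
            _ = ∑ α, (∑ i, ν i α * z i) * (∑ j, (starRingEnd ℂ) (ν j α) * (starRingEnd ℂ) (z j)) := by
                refine Finset.sum_congr rfl fun α _ => ?_
                rw [Finset.sum_mul_sum]
      _ = ∑ α, (2 * z ln * ∑ i, ν i α * z i)
            * (starRingEnd ℂ) (2 * z ln * ∑ i, ν i α * z i) := by
          rw [Finset.mul_sum]
          refine Finset.sum_congr rfl fun α _ => ?_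
          simp only [map_mul, map_sum, map_ofNat]
          ring
  -- pair evaluation
  have eval2 : ∀ i : Fin n, i ≠ ln → ∀ a c : ℂ,
      4 * c * (starRingEnd ℂ) c
        * (a * ((starRingEnd ℂ) a * G i i + (starRingEnd ℂ) c * G i ln)
          + c * ((starRingEnd ℂ) a * G ln i + (starRingEnd ℂ) c * G ln ln))
      = (a * (starRingEnd ℂ) a + c * (starRingEnd ℂ) c)
        * (a * ((starRingEnd ℂ) a * h i i + (starRingEnd ℂ) c * h i ln)
          + c * ((starRingEnd ℂ) a * h ln i + (starRingEnd ℂ) c * h ln ln)) := by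
    intro i hi a c
    set z : Fin n → ℂ := fun k => if k = i then a else if k = ln then c else 0 with hzdef
    have hz : ∀ k, z k = if k = i then a else if k = ln then c else 0 := fun _ => rfl
    have hzl : z ln = c := by rw [hz, if_neg (Ne.symm hi), if_pos rfl]
    have e := key z
    rw [quad2 i ln hi a c z hz G, quad2 i ln hi a c z hz h, norm2 i ln hi a c z hz, hzl] at e
    exact e
  -- triple evaluation
  have eval3 : ∀ i j : Fin n, i ≠ j → i ≠ ln → j ≠ ln → ∀ a b c : ℂ,
      4 * c * (starRingEnd ℂ) c
        * (a * ((starRingEnd ℂ) a * G i i + (starRingEnd ℂ) b * G i j + (starRingEnd ℂ) c * G i ln)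
          + b * ((starRingEnd ℂ) a * G j i + (starRingEnd ℂ) b * G j j + (starRingEnd ℂ) c * G j ln)
          + c * ((starRingEnd ℂ) a * G ln i + (starRingEnd ℂ) b * G ln j + (starRingEnd ℂ) c * G ln ln))
      = (a * (starRingEnd ℂ) a + b * (starRingEnd ℂ) b + c * (starRingEnd ℂ) c)
        * (a * ((starRingEnd ℂ) a * h i i + (starRingEnd ℂ) b * h i j + (starRingEnd ℂ) c * h i ln)
          + b * ((starRingEnd ℂ) a * h j i + (starRingEnd ℂ) b * h j j + (starRingEnd ℂ) c * h j ln)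
          + c * ((starRingEnd ℂ) a * h ln i + (starRingEnd ℂ) b * h ln j + (starRingEnd ℂ) c * h ln ln)) := by
    intro i j hij hil hjl a b c
    set z : Fin n → ℂ := fun k => if k = i then a else if k = j then b else if k = ln then c else 0
      with hzdef
    have hz : ∀ k, z k = if k = i then a else if k = j then b else if k = ln then c else 0 :=
      fun _ => rfl
    have hzl : z ln = c := by
      rw [hz, if_neg (Ne.symm hil), if_neg (Ne.symm hjl), if_pos rfl]
    have e := key z
    rw [quad3 i j ln hij hil hjl a b c z hz G, quad3 i j ln hij hil hjl a b c z hz h,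
      norm3 i j ln hij hil hjl a b c z hz, hzl] at e
    exact e
  -- facts from pairs (i, ln)
  have facts : ∀ i : Fin n, i ≠ ln →
      G i i = G ln ln ∧ G i ln = 0 ∧ G ln i = 0 ∧ h i i = 0 ∧ h i ln = 0 ∧ h ln i = 0 ∧
        h ln ln = 4 * G ln ln := by
    intro i hi
    have E := eval2 i hi
    have e10 := E 1 0
    have e01 := E 0 1
    have e11 := E 1 1
    have e1m1 := E 1 (-1)
    have e1i := E 1 Complex.I
    have e1mi := E 1 (-Complex.I)
    have e12 := E 1 2
    have e12i := E 1 (2 * Complex.I)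
    simp only [map_one, map_zero, map_neg, map_mul, map_ofNat, Complex.conj_I]
      at e10 e01 e11 e1m1 e1i e1mi e12 e12i
    refine ⟨?_, ?_, ?_, ?_, ?_, ?_, ?_⟩
    · linear_combination (-(1:ℂ)/2) * e10 + (-(1:ℂ)/2) * e01 + ((1:ℂ)/8) * e11 + ((1:ℂ)/8) * e1m1
    · linear_combination (norm := (ring_nf; simp only [Complex.I_sq, Ipow3, Ipow4, Ipow5, Ipow6, Ipow7, Ipow8]; try ring1)) ((1:ℂ)/8 + (1/8) * Complex.I) * e10
        + (-(1:ℂ)/2 - (1/2) * Complex.I) * e01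
        + (-(3:ℂ)/16 + (1/48) * Complex.I) * e11
        + ((1:ℂ)/48 + (1/48) * Complex.I) * e1m1
        + ((-(5:ℂ)/24) * Complex.I) * e1i
        + ((1:ℂ)/24) * e12 + (((1:ℂ)/24) * Complex.I) * e12i
    · linear_combination (norm := (ring_nf; simp only [Complex.I_sq, Ipow3, Ipow4, Ipow5, Ipow6, Ipow7, Ipow8]; try ring1)) ((1:ℂ)/8 - (1/8) * Complex.I) * e10
        + (-(1:ℂ)/2 + (1/2) * Complex.I) * e01
        + (-(3:ℂ)/16 - (1/48) * Complex.I) * e11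
        + ((1:ℂ)/48 - (1/48) * Complex.I) * e1m1
        + (((5:ℂ)/24) * Complex.I) * e1i
        + ((1:ℂ)/24) * e12 + ((-(1:ℂ)/24) * Complex.I) * e12i
    · linear_combination (-(1:ℂ)) * e10
    · linear_combination (norm := (ring_nf; simp only [Complex.I_sq, Ipow3, Ipow4, Ipow5, Ipow6, Ipow7, Ipow8]; try ring1)) ((1:ℂ)/4 + (1/4) * Complex.I) * e10
        + (-(1:ℂ) - Complex.I) * e01
        + (-(1:ℂ)/2 + (1/6) * Complex.I) * e11
        + ((1:ℂ)/6 + (1/6) * Complex.I) * e1m1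
        + ((-(2:ℂ)/3) * Complex.I) * e1i
        + ((1:ℂ)/12) * e12 + (((1:ℂ)/12) * Complex.I) * e12i
    · linear_combination (norm := (ring_nf; simp only [Complex.I_sq, Ipow3, Ipow4, Ipow5, Ipow6, Ipow7, Ipow8]; try ring1)) ((1:ℂ)/4 - (1/4) * Complex.I) * e10
        + (-(1:ℂ) + Complex.I) * e01
        + (-(1:ℂ)/2 - (1/6) * Complex.I) * e11
        + ((1:ℂ)/6 - (1/6) * Complex.I) * e1m1
        + (((2:ℂ)/3) * Complex.I) * e1i
        + ((1:ℂ)/12) * e12 + ((-(1:ℂ)/12) * Complex.I) * e12i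
    · linear_combination (-(1:ℂ)) * e01
  -- orthogonality
  have horth : ∀ i j, i ≠ j → G i j = 0 := by
    intro i j hij
    rcases eq_or_ne j ln with rfl | hjln
    · exact (facts i hij).2.1
    rcases eq_or_ne i ln with rfl | hiln
    · exact (facts j hjln).2.2.1
    obtain ⟨hGii, hGiln, hGlni, hhii, hhiln, hhlni, hhll⟩ := facts i hiln
    obtain ⟨hGjj, hGjln, hGlnj, hhjj, hhjln, hhlnj, -⟩ := facts j hjln
    have E := fun a b : ℂ => eval3 i j hij hiln hjln a b 1
    have e1 := E 1 1
    have e2 := E 1 Complex.I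
    have e3 := E 2 1
    have e4 := E 2 Complex.I
    simp only [map_one, map_zero, map_neg, map_mul, map_ofNat, Complex.conj_I] at e1 e2 e3 e4
    rw [hGii, hGiln, hGlni, hGjj, hGjln, hGlnj, hhii, hhiln, hhlni, hhjj, hhjln, hhlnj, hhll]
      at e1 e2 e3 e4
    linear_combination (norm := (ring_nf; simp only [Complex.I_sq, Ipow3, Ipow4, Ipow5, Ipow6, Ipow7, Ipow8]; try ring1)) ((1:ℂ)/4) * e1 + (((1:ℂ)/4) * Complex.I) * e2
      + (-(1:ℂ)/16) * e3 + ((-(1:ℂ)/16) * Complex.I) * e4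
  have hnorm : ∀ i, G i i = G ln ln := by
    intro i
    rcases eq_or_ne i ln with rfl | hi
    · rfl
    · exact (facts i hi).1
  refine ⟨fun i j hij => by rw [← hGapp i j]; exact horth i j hij,
    fun i j => by rw [← hGapp i i, ← hGapp j j, hnorm i, hnorm j], ?_⟩
  -- the unitary normal form
  have hGnn : ∀ i, G i i = ((∑ α, Complex.normSq (ν i α) : ℝ) : ℂ) := by
    intro i
    rw [hGapp]
    push_cast
    exact Finset.sum_congr rfl fun α _ => (Complex.mul_conj _)
  set gr : ℝ := ∑ α, Complex.normSq (ν ln α) with hgrdef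
  have hgrnn : 0 ≤ gr := Finset.sum_nonneg fun α _ => Complex.normSq_nonneg _
  refine ⟨Real.sqrt gr, Real.sqrt_nonneg _, ?_⟩
  by_cases hgr : gr = 0
  · -- degenerate case : all the ν i vanish
    have hν : ∀ i a, ν i a = 0 := by
      intro i a
      have h1 : ((∑ α, Complex.normSq (ν i α) : ℝ) : ℂ) = ((gr : ℝ) : ℂ) := by
        rw [← hGnn i, hnorm i, hGnn ln]
      have h2 : (∑ α, Complex.normSq (ν i α)) = 0 := by
        have := Complex.ofReal_inj.mp h1
        rw [this, hgr]
      have h3 := (Finset.sum_eq_zero_iff_of_nonneg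
        (fun α _ => Complex.normSq_nonneg (ν i α))).mp h2 a (Finset.mem_univ a)
      exact Complex.normSq_eq_zero.mp h3
    refine ⟨1, one_mem _, ?_⟩
    intro i
    funext a
    rw [Matrix.one_mulVec]
    rw [hν i a, hgr, Real.sqrt_zero]
    simp
  · have hgrpos : 0 < gr := lt_of_le_of_ne hgrnn (Ne.symm hgr)
    have hsq : (0:ℝ) < Real.sqrt gr := Real.sqrt_pos.mpr hgrpos
    have hlamne : ((Real.sqrt gr : ℝ) : ℂ) ≠ 0 := by
      exact_mod_cast ne_of_gt hsq
    have hlamsq : ((Real.sqrt gr : ℝ) : ℂ) * ((Real.sqrt gr : ℝ) : ℂ) = ((gr : ℝ) : ℂ) := by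
      rw [← Complex.ofReal_mul, Real.mul_self_sqrt hgrnn]
    -- the normalized vectors
    set w : Fin n → EuclideanSpace ℂ (Fin m) :=
      fun i => (((Real.sqrt gr : ℝ) : ℂ))⁻¹ • (WithLp.toLp 2 (ν i) : EuclideanSpace ℂ (Fin m)) with hwdef
    have hwa : ∀ i a, (w i) a = (((Real.sqrt gr : ℝ) : ℂ))⁻¹ * ν i a := fun i a => rfl
    have hinner : ∀ (x : EuclideanSpace ℂ (Fin m)) (i : Fin n),
        (inner ℂ x (WithLp.toLp 2 (ν i) : EuclideanSpace ℂ (Fin m)) : ℂ)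
          = ∑ a, (starRingEnd ℂ) (x a) * ν i a := by
      intro x i
      rw [PiLp.inner_apply]
      exact Finset.sum_congr rfl fun a _ => by simp [RCLike.inner_apply, mul_comm]
    have hworth : Orthonormal ℂ w := by
      rw [orthonormal_iff_ite]
      intro i j
      rw [hwdef]
      simp only [inner_smul_left, inner_smul_right, map_inv₀, Complex.conj_ofReal]
      rw [hinner]
      have hsum : ∑ a, (starRingEnd ℂ) (ν i a) * ν j a = (starRingEnd ℂ) (G i j) := by
        rw [hGapp, map_sum]
        refine Finset.sum_congr rfl fun a _ => ?_
        rw [map_mul, Complex.conj_conj]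
        try ring
      rw [hsum]
      rcases eq_or_ne i j with rfl | hij
      · rw [if_pos rfl, hnorm i, hGnn ln, Complex.conj_ofReal]
        have hc : ((∑ α, Complex.normSq (ν ln α) : ℝ) : ℂ) = (↑(Real.sqrt gr) : ℂ) * ↑(Real.sqrt gr) := by
          rw [hlamsq, hgrdef]
        rw [hc]
        field_simp
      · rw [if_neg hij, horth i j hij, map_zero, mul_zero, mul_zero]
    -- extend to an orthonormal basis
    have hcard : Module.finrank ℂ (EuclideanSpace ℂ (Fin m)) = Fintype.card (Fin m) := by
      simp [finrank_euclideanSpace]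
    set v : Fin m → EuclideanSpace ℂ (Fin m) :=
      fun a => if hlt : (a : ℕ) < n then w ⟨a, hlt⟩ else 0 with hvdef
    have hvs : Orthonormal ℂ (Set.restrict {a : Fin m | (a : ℕ) < n} v) := by
      rw [orthonormal_iff_ite]
      rintro ⟨p, hp⟩ ⟨q, hq⟩
      have hp' : (p : ℕ) < n := hp
      have hq' : (q : ℕ) < n := hq
      have : Set.restrict {a : Fin m | (a : ℕ) < n} v ⟨p, hp⟩ = w ⟨p, hp'⟩ := by
        simp only [Set.restrict_apply, hvdef, dif_pos hp']
        exact dif_pos hp'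
      rw [this]
      have : Set.restrict {a : Fin m | (a : ℕ) < n} v ⟨q, hq⟩ = w ⟨q, hq'⟩ := by
        simp only [Set.restrict_apply, hvdef, dif_pos hq']
        exact dif_pos hq'
      rw [this]
      rw [orthonormal_iff_ite] at hworth
      rw [hworth ⟨p, hp'⟩ ⟨q, hq'⟩]
      congr 1
      simp only [eq_iff_iff, Fin.mk.injEq, Subtype.mk.injEq, Fin.ext_iff]
    obtain ⟨b, hb⟩ := hvs.exists_orthonormalBasis_extension_of_card_eq hcard
    have hbw : ∀ i : Fin n, b (Fin.castLE hm i) = w i := by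
      intro i
      have hmem : (Fin.castLE hm i) ∈ {a : Fin m | (a : ℕ) < n} := by
        simp only [Set.mem_setOf_eq, Fin.coe_castLE]
        exact i.isLt
      rw [hb _ hmem, hvdef]
      simp only [Fin.coe_castLE, i.isLt, dif_pos]
    have hborth := orthonormal_iff_ite.mp b.orthonormal
    refine ⟨Matrix.of (fun p q => (starRingEnd ℂ) (b p q)), ?_, ?_⟩
    · rw [Matrix.mem_unitaryGroup_iff]
      ext p q
      simp only [Matrix.mul_apply, Matrix.star_apply, Matrix.of_apply, Matrix.one_apply,
        star_def, Complex.conj_conj]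
      have := hborth p q
      rw [PiLp.inner_apply] at this
      simp only [RCLike.inner_apply] at this
      rw [← this]
      try exact Finset.sum_congr rfl fun a _ => by ring
    · intro i
      funext p
      have hin := hborth p (Fin.castLE hm i)
      rw [hbw i, PiLp.inner_apply] at hin
      simp only [RCLike.inner_apply] at hin
      -- hin : ∑ a, conj (b p a) * w i a = ite (p = castLE hm i) 1 0
      have hmv : (Matrix.of (fun p q => (starRingEnd ℂ) (b p q))).mulVec (ν i) p
          = ∑ a, (starRingEnd ℂ) (b p a) * ν i a := by
        simp [Matrix.mulVec, dotProduct]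
      rw [hmv]
      have hν : ∀ a, ν i a = ((Real.sqrt gr : ℝ) : ℂ) * w i a := by
        intro a
        rw [hwa i a]
        field_simp
      calc ∑ a, (starRingEnd ℂ) (b p a) * ν i a
          = ((Real.sqrt gr : ℝ) : ℂ) * ∑ a, (starRingEnd ℂ) (b p a) * w i a := by
            rw [Finset.mul_sum]
            exact Finset.sum_congr rfl fun a _ => by rw [hν a]; ring
        _ = ((Real.sqrt gr : ℝ) : ℂ) * (if p = Fin.castLE hm i then 1 else 0) := by
            rw [← hin]; congr 1; exact Finset.sum_congr rfl fun a _ => mul_comm _ _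
        _ = (if (p : ℕ) = (i : ℕ) then ((Real.sqrt gr : ℝ) : ℂ) else 0) := by
            rcases eq_or_ne p (Fin.castLE hm i) with rfl | hp
            · rw [if_pos rfl, if_pos (by simp [Fin.coe_castLE]), mul_one]
            · rw [if_neg hp, if_neg, mul_zero]
              intro hc
              exact hp (Fin.ext (by simpa [Fin.coe_castLE] using hc))
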